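/- Let n ≥ 1 be an integer, p a prime dividing Φ_n (the n-th homogeneous cyclotomic factor at the golden ratio), and suppose n = z(p)·p^v with v ≥ 1 and (p, n) ≠ (2, 6), where z(p) is the rank of apparition of p in the Fibonacci sequence. Then p divides Φ_n exactly once, i.e. p ∥ Φ_n. -/

import Mathlib

open Finset

noncomputable def goldenA : ℂ := (1 + Real.sqrt 5) / 2

noncomputable def goldenB : ℂ := (1 - Real.sqrt 5) / 2

noncomputable def goldPhi (n : ℕ) : ℂ :=
  if n = 1 then 1 else
    ∏ k ∈ (Finset.Icc 1 n).filter (fun k => Nat.gcd n k = 1),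
      (goldenA - Complex.exp (2 * Real.pi * Complex.I * k / n) * goldenB)

noncomputable def zrank (p : ℕ) : ℕ := sInf {n | 0 < n ∧ p ∣ Nat.fib n}

section Aux
open Polynomial Complex

local notation "α" => goldenA
local notation "β" => goldenB

lemma sqrt5_sq : ((Real.sqrt 5 : ℝ) : ℂ) ^ 2 = 5 := by
  rw [← Complex.ofReal_pow, Real.sq_sqrt (by norm_num : (5:ℝ) ≥ 0)]
  norm_num

lemma sqrt5_ne : ((Real.sqrt 5 : ℝ) : ℂ) ≠ 0 := by
  intro h
  have := sqrt5_sq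
  rw [h] at this
  norm_num at this

lemma gA_sub_gB : goldenA - goldenB = ((Real.sqrt 5 : ℝ) : ℂ) := by
  unfold goldenA goldenB; ring

lemma gAB : goldenA * goldenB = -1 := by
  unfold goldenA goldenB
  have := sqrt5_sq
  linear_combination (-1/4 : ℂ) * this

lemma gB_ne : goldenB ≠ 0 := by
  intro h
  have := gAB
  rw [h, mul_zero] at this
  norm_num at this

lemma gA_sq : goldenA ^ 2 = goldenA + 1 := by
  unfold goldenA
  linear_combination (1/4 : ℂ) * sqrt5_sq

lemma gB_sq : goldenB ^ 2 = goldenB + 1 := by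
  unfold goldenB
  linear_combination (1/4 : ℂ) * sqrt5_sq

lemma pow_sub_pow_fib : ∀ n : ℕ, goldenA ^ n - goldenB ^ n = ((Real.sqrt 5 : ℝ) : ℂ) * (Nat.fib n) := by
  intro n
  induction n using Nat.twoStepInduction with
  | zero => simp
  | one => simpa using gA_sub_gB
  | more n ih1 ih2 =>
      have h : Nat.fib (n + 2) = Nat.fib n + Nat.fib (n + 1) := Nat.fib_add_two
      rw [h]
      push_cast
      have ha : α ^ (n + 2) = α ^ n * α ^ 2 := by ring
      have hb : β ^ (n + 2) = β ^ n * β ^ 2 := by ring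
      rw [ha, hb, gA_sq, gB_sq]
      ring_nf
      ring_nf at ih1 ih2
      linear_combination ih1 + ih2

lemma isIntegral_gA : IsIntegral ℤ goldenA := by
  refine ⟨X ^ 2 - (X + 1), ?_, ?_⟩
  · apply Polynomial.monic_X_pow_sub
    have h1 : ((X + 1 : ℤ[X])).degree ≤ 1 := by
      exact Polynomial.degree_add_le_of_degree_le Polynomial.degree_X_le
        (Polynomial.degree_one_le.trans (by norm_num : (0 : WithBot ℕ) ≤ 1))
    exact lt_of_le_of_lt h1 (by norm_num)
  · simp only [eval₂_sub, eval₂_add, eval₂_X_pow, eval₂_X, eval₂_one]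
    rw [gA_sq]; ring

lemma isIntegral_gB : IsIntegral ℤ goldenB := by
  refine ⟨X ^ 2 - (X + 1), ?_, ?_⟩
  · apply Polynomial.monic_X_pow_sub
    have h1 : ((X + 1 : ℤ[X])).degree ≤ 1 := by
      exact Polynomial.degree_add_le_of_degree_le Polynomial.degree_X_le
        (Polynomial.degree_one_le.trans (by norm_num : (0 : WithBot ℕ) ≤ 1))
    exact lt_of_le_of_lt h1 (by norm_num)
  · simp only [eval₂_sub, eval₂_add, eval₂_X_pow, eval₂_X, eval₂_one]
    rw [gB_sq]; ring

lemma isIntegral_sqrt5 : IsIntegral ℤ ((Real.sqrt 5 : ℝ) : ℂ) := by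
  rw [← gA_sub_gB]; exact isIntegral_gA.sub isIntegral_gB

-- a rational number (as a complex number) that is integral over ℤ is an integer
lemma exists_int_of_integral (C : ℂ) (hC : IsIntegral ℤ C) (q : ℚ) (hq : (q : ℂ) = C) :
    ∃ c : ℤ, (c : ℚ) = q := by
  have h1 : IsIntegral ℤ q := by
    have : algebraMap ℚ ℂ q = C := hq
    rw [← this] at hC
    exact (isIntegral_algebraMap_iff (algebraMap ℚ ℂ).injective).mp hC
  exact IsIntegrallyClosed.isIntegral_iff.mp h1

lemma no_inv_int (p : ℕ) (hp : 2 ≤ p) (t : ℂ) (ht : IsIntegral ℤ t) (h : (p : ℂ) * t = 1) :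
    False := by
  have hp0 : (p : ℂ) ≠ 0 := Nat.cast_ne_zero.mpr (by omega)
  have hq : ((1 / p : ℚ) : ℂ) = t := by
    push_cast
    rw [div_eq_iff hp0]
    linear_combination -h
  obtain ⟨c, hc⟩ := exists_int_of_integral t ht (1 / p) hq
  have hpq : (c : ℚ) * p = 1 := by
    rw [hc]
    field_simp
  have : (c * p : ℤ) = 1 := by exact_mod_cast hpq
  have : (p : ℤ) ∣ 1 := Dvd.intro_left c this
  have := Int.le_of_dvd one_pos this
  omega

lemma dvd_of_mul_integral (m N : ℕ) (hm : m ≠ 0) (C : ℂ) (hC : IsIntegral ℤ C)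
    (h : (m : ℂ) * C = N) : m ∣ N := by
  have hm0 : (m : ℂ) ≠ 0 := Nat.cast_ne_zero.mpr hm
  have hq : ((N / m : ℚ) : ℂ) = C := by
    push_cast
    field_simp
    linear_combination -h
  obtain ⟨c, hc⟩ := exists_int_of_integral C hC (N / m) hq
  have hpq : (c : ℚ) * m = N := by
    rw [hc]
    field_simp
  have hint : (c * m : ℤ) = N := by exact_mod_cast hpq
  have : (m : ℤ) ∣ (N : ℤ) := Dvd.intro_left c hint
  exact_mod_cast this

end Aux


section Cyclo
open Polynomial Complex

lemma goldPhi_eq (d : ℕ) (hd : 2 ≤ d) :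
    goldPhi d = goldenB ^ (Nat.totient d) *
      (Polynomial.cyclotomic d ℂ).eval (goldenA / goldenB) := by
  have hd0 : d ≠ 0 := by omega
  have hd0' : (0:ℕ) < d := by omega
  set ζ : ℂ := Complex.exp (2 * Real.pi * Complex.I / d) with hζdef
  have hζ : IsPrimitiveRoot ζ d := Complex.isPrimitiveRoot_exp d hd0
  set s : Finset ℕ := (Finset.Icc 1 d).filter (fun k => Nat.gcd d k = 1) with hs
  have hmem : ∀ k ∈ s, 1 ≤ k ∧ k < d ∧ Nat.Coprime k d := by
    intro k hk
    rw [hs, Finset.mem_filter, Finset.mem_Icc] at hk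
    refine ⟨hk.1.1, ?_, (Nat.coprime_comm.mp hk.2)⟩
    rcases lt_or_eq_of_le hk.1.2 with h | h
    · exact h
    · exfalso; rw [h] at hk; have := hk.2; rw [Nat.gcd_self] at this; omega
  -- bijection between s and primitiveRoots d ℂ via k ↦ ζ ^ k
  have hmaps : ∀ k ∈ s, ζ ^ k ∈ primitiveRoots d ℂ := by
    intro k hk
    obtain ⟨h1, h2, h3⟩ := hmem k hk
    exact (mem_primitiveRoots hd0').mpr (hζ.pow_of_coprime k h3)
  have hinj : ∀ k₁ ∈ s, ∀ k₂ ∈ s, ζ ^ k₁ = ζ ^ k₂ → k₁ = k₂ := by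
    intro k₁ h₁ k₂ h₂ h
    exact hζ.pow_inj (hmem k₁ h₁).2.1 (hmem k₂ h₂).2.1 h
  have hsurj : ∀ μ ∈ primitiveRoots d ℂ, ∃ k ∈ s, ζ ^ k = μ := by
    intro μ hμ
    haveI : NeZero d := ⟨hd0⟩
    have hμ' : IsPrimitiveRoot μ d := (mem_primitiveRoots hd0').mp hμ
    obtain ⟨i, hi, hζi⟩ := hζ.eq_pow_of_pow_eq_one hμ'.pow_eq_one
    have hcop : i.Coprime d := by
      rw [← (hζ.pow_iff_coprime hd0' i)]
      rw [hζi]; exact hμ'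
    have hi1 : 1 ≤ i := by
      rcases Nat.eq_zero_or_pos i with h | h
      · exfalso; rw [h] at hcop; unfold Nat.Coprime at hcop
        simp at hcop; omega
      · exact h
    refine ⟨i, ?_, hζi⟩
    rw [hs, Finset.mem_filter, Finset.mem_Icc]
    exact ⟨⟨hi1, by omega⟩, Nat.coprime_comm.mp hcop⟩
  have hprodbij : ∏ k ∈ s, (goldenA / goldenB - ζ ^ k)
      = ∏ μ ∈ primitiveRoots d ℂ, (goldenA / goldenB - μ) :=
    Finset.prod_bij (fun k _ => ζ ^ k) hmaps hinj
      (fun μ hμ => by obtain ⟨k, hk, hkeq⟩ := hsurj μ hμ; exact ⟨k, hk, hkeq⟩)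
      (fun k _ => rfl)
  have hcard : s.card = Nat.totient d := by
    rw [Finset.card_bij (fun k _ => ζ ^ k) hmaps hinj
      (fun μ hμ => by obtain ⟨k, hk, hkeq⟩ := hsurj μ hμ; exact ⟨k, hk, hkeq⟩)]
    exact hζ.card_primitiveRoots
  have hfac : ∀ k ∈ s, goldenA - Complex.exp (2 * Real.pi * Complex.I * k / d) * goldenB
      = goldenB * (goldenA / goldenB - ζ ^ k) := by
    intro k hk
    have he : Complex.exp (2 * Real.pi * Complex.I * k / d) = ζ ^ k := by
      rw [hζdef, ← Complex.exp_nat_mul]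
      congr 1
      have : (d : ℂ) ≠ 0 := Nat.cast_ne_zero.mpr hd0
      field_simp
    rw [he, mul_sub, mul_div_cancel₀ _ gB_ne]
    ring
  rw [goldPhi, if_neg (by omega : ¬ d = 1)]
  rw [Polynomial.cyclotomic_eq_prod_X_sub_primitiveRoots hζ, Polynomial.eval_prod]
  simp only [Polynomial.eval_sub, Polynomial.eval_X, Polynomial.eval_C]
  rw [← hprodbij, ← hs, Finset.prod_congr rfl hfac, Finset.prod_mul_distrib,
    Finset.prod_const, hcard]

lemma prod_goldPhi (n : ℕ) (hn : 1 ≤ n) :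
    ∏ d ∈ n.divisors, goldPhi d = (Nat.fib n : ℂ) := by
  have hn0 : n ≠ 0 := by omega
  have h1 : (1:ℕ) ∈ n.divisors := Nat.one_mem_divisors.mpr hn0
  set w : ℂ := goldenA / goldenB with hw
  set P : ℕ → ℂ := fun d => goldenB ^ (Nat.totient d) * (Polynomial.cyclotomic d ℂ).eval w
    with hP
  have hP1 : P 1 = ((Real.sqrt 5 : ℝ) : ℂ) := by
    rw [hP]
    simp only [Nat.totient_one, pow_one, Polynomial.cyclotomic_one, Polynomial.eval_sub,
      Polynomial.eval_X, Polynomial.eval_one]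
    rw [hw, mul_sub, mul_div_cancel₀ _ gB_ne, mul_one, gA_sub_gB]
  have hProdP : ∏ d ∈ n.divisors, P d = goldenA ^ n - goldenB ^ n := by
    rw [hP]
    rw [Finset.prod_mul_distrib, Finset.prod_pow_eq_pow_sum, ← Polynomial.eval_prod,
      Polynomial.prod_cyclotomic_eq_X_pow_sub_one (by omega) ℂ]
    have hsum : ∑ d ∈ n.divisors, Nat.totient d = n := Nat.sum_totient n
    rw [hsum]
    simp only [Polynomial.eval_sub, Polynomial.eval_pow, Polynomial.eval_X, Polynomial.eval_one]
    rw [hw, div_pow, mul_sub, mul_one, mul_div_cancel₀ _ (pow_ne_zero n gB_ne)]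
  have herase : ∀ d ∈ n.divisors.erase 1, goldPhi d = P d := by
    intro d hd
    have hd1 : d ≠ 1 := (Finset.mem_erase.mp hd).1
    have hdm : d ∈ n.divisors := (Finset.mem_erase.mp hd).2
    have hd0 : d ≠ 0 := by
      intro h; rw [h] at hdm; exact (Nat.pos_of_mem_divisors hdm).ne' rfl
    exact goldPhi_eq d (by omega)
  have key : ((Real.sqrt 5 : ℝ) : ℂ) * ∏ d ∈ n.divisors, goldPhi d
      = ((Real.sqrt 5 : ℝ) : ℂ) * (Nat.fib n : ℂ) := by
    calc ((Real.sqrt 5 : ℝ) : ℂ) * ∏ d ∈ n.divisors, goldPhi d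
        = ((Real.sqrt 5 : ℝ) : ℂ) * ((∏ d ∈ n.divisors.erase 1, goldPhi d) * goldPhi 1) := by
          rw [Finset.prod_erase_mul _ _ h1]
      _ = (∏ d ∈ n.divisors.erase 1, P d) * P 1 := by
          rw [goldPhi, if_pos rfl, mul_one, hP1, Finset.prod_congr rfl herase]; ring
      _ = ∏ d ∈ n.divisors, P d := Finset.prod_erase_mul _ _ h1
      _ = goldenA ^ n - goldenB ^ n := hProdP
      _ = ((Real.sqrt 5 : ℝ) : ℂ) * (Nat.fib n : ℂ) := pow_sub_pow_fib n
  exact mul_left_cancel₀ sqrt5_ne key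

lemma goldPhi_integral (d : ℕ) : IsIntegral ℤ (goldPhi d) := by
  rw [goldPhi]
  split_ifs with h
  · exact isIntegral_one
  · rcases Nat.eq_zero_or_pos d with hd | hd
    · subst hd
      have he : (Finset.Icc 1 0).filter (fun k => Nat.gcd 0 k = 1) = ∅ := by
        simp
      rw [he, Finset.prod_empty]
      exact isIntegral_one
    · have hd0 : d ≠ 0 := by omega
      rw [show (∏ k ∈ (Finset.Icc 1 d).filter (fun k => Nat.gcd d k = 1),
          (goldenA - Complex.exp (2 * Real.pi * Complex.I * k / d) * goldenB))
          = _ from rfl]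
      have : ∀ k ∈ (Finset.Icc 1 d).filter (fun k => Nat.gcd d k = 1),
          (goldenA - Complex.exp (2 * Real.pi * Complex.I * k / d) * goldenB)
            ∈ integralClosure ℤ ℂ := by
        intro k hk
        apply Subalgebra.sub_mem
        · exact isIntegral_gA
        · apply Subalgebra.mul_mem
          · show IsIntegral ℤ (Complex.exp (2 * Real.pi * Complex.I * k / d))
            refine ⟨Polynomial.X ^ d - Polynomial.C 1, Polynomial.monic_X_pow_sub_C 1 hd0, ?_⟩
            have hdc : (d : ℂ) ≠ 0 := Nat.cast_ne_zero.mpr hd0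
            have harg : (d : ℂ) * (2 * Real.pi * Complex.I * k / d)
                = (k : ℤ) * (2 * Real.pi * Complex.I) := by
              push_cast; field_simp
            have hroot : Complex.exp (2 * Real.pi * Complex.I * k / d) ^ d = 1 := by
              rw [← Complex.exp_nat_mul, harg, Complex.exp_int_mul_two_pi_mul_I]
            simp [Polynomial.eval₂_sub, Polynomial.eval₂_X_pow, Polynomial.eval₂_C, hroot]
          · exact isIntegral_gB
      exact Subalgebra.prod_mem _ this

end Cyclo


section LTE
open Complex

lemma isIntegral_natC (a : ℕ) : IsIntegral ℤ (a : ℂ) := by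
  have h : ((a : ℤ) : ℂ) = (a : ℂ) := by push_cast; rfl
  rw [← h]
  exact isIntegral_algebraMap

lemma binom_lin (y d : ℂ) (hy : IsIntegral ℤ y) (hd : IsIntegral ℤ d) :
    ∀ i : ℕ, ∃ c : ℂ, IsIntegral ℤ c ∧
      (y + d) ^ i = y ^ i + (i : ℂ) * y ^ (i - 1) * d + d ^ 2 * c := by
  intro i
  induction i with
  | zero => exact ⟨0, isIntegral_zero, by simp⟩
  | succ j ih =>
      obtain ⟨c, hcI, hcEq⟩ := ih
      rcases Nat.eq_zero_or_pos j with h0 | h0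
      · subst h0
        refine ⟨0, isIntegral_zero, by push_cast; ring⟩
      · obtain ⟨t, rfl⟩ : ∃ t, j = t + 1 := ⟨j - 1, by omega⟩
        refine ⟨goldenA * 0 + (y * c + (t + 1 : ℕ) * y ^ t + d * c), ?_, ?_⟩
        · apply IsIntegral.add
          · exact isIntegral_gA.mul isIntegral_zero
          · exact ((hy.mul hcI).add ((isIntegral_natC (t+1)).mul (hy.pow t))).add (hd.mul hcI)
        · have hstep : (y + d) ^ (t + 1 + 1) = (y + d) * (y + d) ^ (t + 1) := by ring
          rw [hstep, hcEq]
          simp only [show t + 1 + 1 - 1 = t + 1 from rfl, show t + 1 - 1 = t from rfl]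
          push_cast
          ring

lemma geom_lte (y d : ℂ) (hy : IsIntegral ℤ y) (hd : IsIntegral ℤ d) (p : ℕ) :
    ∃ r : ℂ, IsIntegral ℤ r ∧
      ∑ i ∈ Finset.range p, (y + d) ^ i * y ^ (p - 1 - i)
        = (p : ℂ) * y ^ (p - 1) + ((∑ i ∈ Finset.range p, i : ℕ) : ℂ) * y ^ (p - 2) * d
          + d ^ 2 * r := by
  choose c hcI hcEq using binom_lin y d hy hd
  refine ⟨∑ i ∈ Finset.range p, c i * y ^ (p - 1 - i), ?_, ?_⟩
  · apply IsIntegral.sum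
    intro i _
    exact (hcI i).mul (hy.pow _)
  · have hterm : ∀ i ∈ Finset.range p,
        (y + d) ^ i * y ^ (p - 1 - i)
          = y ^ (p - 1) + (i : ℂ) * y ^ (p - 2) * d + d ^ 2 * (c i * y ^ (p - 1 - i)) := by
      intro i hi
      have hip : i < p := Finset.mem_range.mp hi
      rw [hcEq i]
      rcases Nat.eq_zero_or_pos i with h0 | h0
      · subst h0
        have e2 : (0:ℕ) + (p - 1 - 0) = p - 1 := by omega
        have h1 : y ^ (0:ℕ) * y ^ (p - 1 - 0) = y ^ (p - 1) := by
          rw [← pow_add, e2]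
        push_cast
        linear_combination h1
      · have h1 : y ^ i * y ^ (p - 1 - i) = y ^ (p - 1) := by
          rw [← pow_add]; congr 1; omega
        have h2 : y ^ (i - 1) * y ^ (p - 1 - i) = y ^ (p - 2) := by
          rw [← pow_add]; congr 1; omega
        linear_combination h1 + (i : ℂ) * d * h2
    rw [Finset.sum_congr rfl hterm]
    rw [Finset.sum_add_distrib, Finset.sum_add_distrib]
    congr 1
    · congr 1
      · rw [Finset.sum_const, Finset.card_range, nsmul_eq_mul]
      · rw [← Finset.sum_mul, ← Finset.sum_mul]
        congr 2
        rw [Nat.cast_sum]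
    · rw [← Finset.mul_sum]

end LTE


section LTE2
open Complex

lemma lte_odd (p k N : ℕ) (hp : p.Prime) (hodd : p ≠ 2) (hk : 1 ≤ k) (hpk : p ∣ Nat.fib k)
    (hN : Nat.fib (p * k) = Nat.fib k * N) : ¬ p ^ 2 ∣ N := by
  intro hdvd
  obtain ⟨N₁, hN₁⟩ := hdvd
  obtain ⟨g, hg⟩ := hpk
  set x := goldenA ^ k with hxdef
  set y := goldenB ^ k with hydef
  have hxy : x - y = ((Real.sqrt 5:ℝ):ℂ) * (Nat.fib k : ℂ) := pow_sub_pow_fib k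
  have hfibk0 : (Nat.fib k : ℂ) ≠ 0 := Nat.cast_ne_zero.mpr (Nat.fib_pos.mpr hk).ne'
  have hxy0 : x - y ≠ 0 := by rw [hxy]; exact mul_ne_zero sqrt5_ne hfibk0
  have hxp : x ^ p - y ^ p = ((Real.sqrt 5:ℝ):ℂ) * (Nat.fib (p*k) : ℂ) := by
    rw [hxdef, hydef, ← pow_mul, ← pow_mul, mul_comm k p]
    exact pow_sub_pow_fib (p*k)
  have hSN : ∑ i ∈ Finset.range p, x ^ i * y ^ (p-1-i) = (N:ℂ) := by
    apply mul_right_cancel₀ hxy0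
    rw [geom_sum₂_mul x y p, hxp, hxy, hN]
    push_cast
    ring
  have hyI : IsIntegral ℤ y := isIntegral_gB.pow k
  have hdI : IsIntegral ℤ (x - y) := (isIntegral_gA.pow k).sub hyI
  obtain ⟨r, hrI, hrEq⟩ := geom_lte y (x - y) hyI hdI p
  have hfix : y + (x - y) = x := by ring
  rw [hfix, hSN] at hrEq
  -- p divides the triangular number
  set T := ∑ i ∈ Finset.range p, i with hT
  have hT2 : T * 2 = p * (p - 1) := Finset.sum_range_id_mul_two p
  have hpT : p ∣ T := by
    have h2 : p ∣ T * 2 := ⟨p - 1, by omega⟩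
    rcases (Nat.Prime.dvd_mul hp).mp h2 with h | h
    · exact h
    · exact absurd ((Nat.prime_dvd_prime_iff_eq hp Nat.prime_two).mp h) hodd
  obtain ⟨T₁, hT₁⟩ := hpT
  set R : ℂ := (T₁:ℂ) * y^(p-2) * (((Real.sqrt 5:ℝ):ℂ) * (g:ℂ))
      + (((Real.sqrt 5:ℝ):ℂ))^2 * (g:ℂ)^2 * r with hR
  have hRI : IsIntegral ℤ R := by
    apply IsIntegral.add
    · exact ((isIntegral_natC T₁).mul (hyI.pow _)).mul (isIntegral_sqrt5.mul (isIntegral_natC g))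
    · exact ((isIntegral_sqrt5.pow 2).mul ((isIntegral_natC g).pow 2)).mul hrI
  have hNEq : (N:ℂ) = (p:ℂ) * y^(p-1) + (p:ℂ)^2 * R := by
    rw [hrEq, hR, hxy, hg, hT₁]
    push_cast
    ring
  have hpc : (p:ℂ) ≠ 0 := Nat.cast_ne_zero.mpr hp.pos.ne'
  have hyp : y^(p-1) = (p:ℂ) * ((N₁:ℂ) - R) := by
    apply mul_left_cancel₀ hpc
    have hNc : (N:ℂ) = (p:ℂ)^2 * (N₁:ℂ) := by rw [hN₁]; push_cast; ring
    rw [hNc] at hNEq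
    linear_combination -hNEq
  have hunit : goldenB * (-goldenA) = 1 := by linear_combination -gAB
  have hone : (p:ℂ) * (((N₁:ℂ) - R) * (-goldenA)^(k*(p-1))) = 1 := by
    have hyy : y^(p-1) = goldenB^(k*(p-1)) := by rw [hydef, ← pow_mul]
    have h1 : goldenB^(k*(p-1)) * (-goldenA)^(k*(p-1)) = 1 := by
      rw [← mul_pow, hunit, one_pow]
    calc (p:ℂ) * (((N₁:ℂ) - R) * (-goldenA)^(k*(p-1)))
        = ((p:ℂ) * ((N₁:ℂ) - R)) * (-goldenA)^(k*(p-1)) := by ring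
      _ = y^(p-1) * (-goldenA)^(k*(p-1)) := by rw [← hyp]
      _ = 1 := by rw [hyy]; exact h1
  exact no_inv_int p hp.two_le _
    (((isIntegral_natC N₁).sub hRI).mul ((isIntegral_gA.neg).pow _)) hone

end LTE2


section Zrank

lemma fib_pair_back (p : ℕ) (t s : ℕ)
    (h1 : (Nat.fib (t+1) : ZMod p) = Nat.fib (s+1))
    (h2 : (Nat.fib (t+2) : ZMod p) = Nat.fib (s+2)) :
    (Nat.fib t : ZMod p) = Nat.fib s := by
  have ht : (Nat.fib (t+2) : ZMod p) = Nat.fib t + Nat.fib (t+1) := by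
    rw [Nat.fib_add_two]; push_cast; ring
  have hs : (Nat.fib (s+2) : ZMod p) = Nat.fib s + Nat.fib (s+1) := by
    rw [Nat.fib_add_two]; push_cast; ring
  rw [ht, hs, h1] at h2
  exact add_right_cancel h2

lemma fib_pair_shift (p : ℕ) : ∀ (a : ℕ) (t s : ℕ),
    ((Nat.fib (t+a) : ZMod p) = Nat.fib (s+a) ∧ (Nat.fib (t+a+1) : ZMod p) = Nat.fib (s+a+1)) →
    ((Nat.fib t : ZMod p) = Nat.fib s ∧ (Nat.fib (t+1) : ZMod p) = Nat.fib (s+1)) := by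
  intro a
  induction a with
  | zero => intro t s h; simpa using h
  | succ b ih =>
      intro t s h
      have e1 : t + (b+1) = t + b + 1 := by ring
      have e2 : s + (b+1) = s + b + 1 := by ring
      have e3 : t + (b+1) + 1 = t + b + 2 := by ring
      have e4 : s + (b+1) + 1 = s + b + 2 := by ring
      rw [e1, e2] at h
      have h2 := h.2
      rw [show t + b + 1 + 1 = t + b + 2 from rfl, show s + b + 1 + 1 = s + b + 2 from rfl] at h2
      apply ih t s
      exact ⟨fib_pair_back p (t+b) (s+b) h.1 h2, h.1⟩

lemma exists_fib_dvd (p : ℕ) (hp : p.Prime) : ∃ n, 0 < n ∧ p ∣ Nat.fib n := by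
  haveI : Fact p.Prime := ⟨hp⟩
  obtain ⟨a, b, hab, hfab⟩ := Finite.exists_ne_map_eq_of_infinite
    (fun i : ℕ => ((Nat.fib i : ZMod p), (Nat.fib (i+1) : ZMod p)))
  wlog hlt : a < b generalizing a b
  · exact this b a hab.symm hfab.symm (by omega)
  have h1 : (Nat.fib a : ZMod p) = Nat.fib b := congrArg Prod.fst hfab
  have h2 : (Nat.fib (a+1) : ZMod p) = Nat.fib (b+1) := congrArg Prod.snd hfab
  have key := fib_pair_shift p a 0 (b - a)
    (by
      constructor
      · simpa [Nat.sub_add_cancel hlt.le] using h1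
      · simpa [Nat.sub_add_cancel hlt.le] using h2)
  have h0 : (Nat.fib (b - a) : ZMod p) = 0 := by
    have := key.1
    rw [Nat.fib_zero] at this
    simpa using this.symm
  refine ⟨b - a, by omega, ?_⟩
  exact (ZMod.natCast_eq_zero_iff _ p).mp h0

lemma zrank_mem (p : ℕ) (hp : p.Prime) : 0 < zrank p ∧ p ∣ Nat.fib (zrank p) :=
  Nat.sInf_mem (exists_fib_dvd p hp)

lemma zrank_two : zrank 2 = 3 := by
  have hmem : (3:ℕ) ∈ {n | 0 < n ∧ 2 ∣ Nat.fib n} := by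
    constructor
    · norm_num
    · decide
  have hle : zrank 2 ≤ 3 := Nat.sInf_le hmem
  have hz := zrank_mem 2 Nat.prime_two
  set z := zrank 2 with hzd
  rcases hz with ⟨hz0, hzd2⟩
  interval_cases z
  · exfalso; revert hzd2; decide
  · exfalso; revert hzd2; decide
  · rfl

end Zrank


section Two

lemma fib_mod4 : ∀ j : ℕ, Nat.fib (6*j) % 4 = 0 ∧ Nat.fib (6*j+1) % 4 = 1 := by
  intro j
  induction j with
  | zero => decide
  | succ i ih =>
      set a := 6 * i with ha
      have h0 : Nat.fib (a+2) = Nat.fib a + Nat.fib (a+1) := Nat.fib_add_two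
      have h1 : Nat.fib (a+3) = Nat.fib (a+1) + Nat.fib (a+2) := Nat.fib_add_two
      have h2 : Nat.fib (a+4) = Nat.fib (a+2) + Nat.fib (a+3) := Nat.fib_add_two
      have h3 : Nat.fib (a+5) = Nat.fib (a+3) + Nat.fib (a+4) := Nat.fib_add_two
      have h4 : Nat.fib (a+6) = Nat.fib (a+4) + Nat.fib (a+5) := Nat.fib_add_two
      have h5 : Nat.fib (a+7) = Nat.fib (a+5) + Nat.fib (a+6) := Nat.fib_add_two
      have e1 : 6 * (i+1) = a + 6 := by omega
      have e2 : 6 * (i+1) + 1 = a + 7 := by omega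
      rw [e1]
      rw [show a+6+1 = a+7 from rfl]
      omega

lemma lte_two (k N : ℕ) (h6 : 6 ∣ k) (hk : 0 < k)
    (hN : Nat.fib (2 * k) = Nat.fib k * N) : ¬ 2 ^ 2 ∣ N := by
  obtain ⟨j, rfl⟩ := h6
  have hk0 : 0 < 6 * j := hk
  have hfk : 0 < Nat.fib (6*j) := Nat.fib_pos.mpr hk0
  have htm := Nat.fib_two_mul (6*j)
  rw [hN] at htm
  have hNe : N = 2 * Nat.fib (6*j+1) - Nat.fib (6*j) := Nat.eq_of_mul_eq_mul_left hfk htm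
  have hmod := fib_mod4 j
  have hle : Nat.fib (6*j) ≤ 2 * Nat.fib (6*j+1) := by
    have := Nat.fib_le_fib_succ (n := 6*j)
    omega
  omega

end Two

theorem goldPhi_prime_valuation (n p v m : ℕ) (hn : 1 ≤ n) (hp : p.Prime)
    (hm : (m : ℂ) = goldPhi n) (hpm : p ∣ m) (hv : 1 ≤ v)
    (hnz : n = zrank p * p ^ v) (hne : ¬(p = 2 ∧ n = 6)) :
    p ∣ m ∧ ¬ p ^ 2 ∣ m := by
  refine ⟨hpm, ?_⟩
  intro hsq
  obtain ⟨hz0, hzf⟩ := zrank_mem p hp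
  set z := zrank p with hzdef
  set k := z * p ^ (v - 1) with hkdef
  have hn_eq : n = p * k := by
    rw [hkdef, hnz]
    have hpow : p ^ v = p ^ (v-1) * p := by
      rw [← pow_succ]
      congr 1
      omega
    rw [hpow]; ring
  have hk0 : 0 < k := Nat.mul_pos hz0 (pow_pos hp.pos _)
  have hn0 : n ≠ 0 := by omega
  have hkdvd : k ∣ n := ⟨p, by rw [hn_eq]; ring⟩
  have hkn : k < n := by
    rw [hn_eq]
    have h2 := hp.two_le
    have : 1 * k < p * k := (Nat.mul_lt_mul_right hk0).mpr (by omega)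
    omega
  obtain ⟨N, hNdef⟩ := Nat.fib_dvd k n hkdvd
  have hfibn0 : 0 < Nat.fib n := Nat.fib_pos.mpr (by omega)
  have hN0 : N ≠ 0 := by
    intro h; rw [h, mul_zero] at hNdef; omega
  have hsub : k.divisors ⊆ n.divisors := Nat.divisors_subset_of_dvd hn0 hkdvd
  have hsdiff : (∏ d ∈ n.divisors \ k.divisors, goldPhi d) * (Nat.fib k : ℂ)
      = (Nat.fib n : ℂ) := by
    rw [← prod_goldPhi k hk0, ← prod_goldPhi n hn]
    exact Finset.prod_sdiff hsub
  have hfibkc : (Nat.fib k : ℂ) ≠ 0 := Nat.cast_ne_zero.mpr (Nat.fib_pos.mpr hk0).ne'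
  have hsd : ∏ d ∈ n.divisors \ k.divisors, goldPhi d = (N : ℂ) := by
    apply mul_right_cancel₀ hfibkc
    rw [hsdiff, hNdef]; push_cast; ring
  have hnmem : n ∈ n.divisors \ k.divisors := by
    rw [Finset.mem_sdiff]
    constructor
    · exact Nat.mem_divisors_self n hn0
    · intro hmem
      have h1 : n ∣ k := (Nat.mem_divisors.mp hmem).1
      have := Nat.le_of_dvd hk0 h1
      omega
  have hmC : (m : ℂ) * (∏ d ∈ (n.divisors \ k.divisors).erase n, goldPhi d) = (N : ℂ) := by
    rw [hm, ← hsd, ← Finset.prod_erase_mul _ _ hnmem]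
    ring
  have hCint : IsIntegral ℤ (∏ d ∈ (n.divisors \ k.divisors).erase n, goldPhi d) := by
    apply Subalgebra.prod_mem (integralClosure ℤ ℂ)
    intro d _
    exact goldPhi_integral d
  have hm0 : m ≠ 0 := by
    intro h
    rw [h] at hmC
    push_cast at hmC
    rw [zero_mul] at hmC
    exact hN0 (by exact_mod_cast hmC.symm)
  have hmN : m ∣ N := dvd_of_mul_integral m N hm0 _ hCint hmC
  have hfibpk : Nat.fib (p * k) = Nat.fib k * N := by rw [← hn_eq]; exact hNdef
  have hp2N : ¬ p ^ 2 ∣ N := by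
    rcases eq_or_ne p 2 with hp2 | hp2
    · subst hp2
      have hz3 : z = 3 := zrank_two
      have hv2 : 2 ≤ v := by
        rcases Nat.lt_or_ge v 2 with h | h
        · exfalso
          have hv1 : v = 1 := by omega
          apply hne
          refine ⟨rfl, ?_⟩
          rw [hnz, hz3, hv1]
          norm_num
        · exact h
      have h6 : 6 ∣ k := by
        rw [hkdef, hz3]
        have : (2:ℕ) ^ (v-1) = 2 * 2 ^ (v-2) := by
          rw [← pow_succ']
          congr 1
          omega
        rw [this]
        exact ⟨2 ^ (v-2), by ring⟩
      exact lte_two k N h6 hk0 hfibpk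
    · have hzk : z ∣ k := ⟨p ^ (v-1), rfl⟩
      have hpfk : p ∣ Nat.fib k := hzf.trans (Nat.fib_dvd z k hzk)
      exact lte_odd p k N hp hp2 hk0 hpfk hfibpk
  exact hp2N (hsq.trans hmN)
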